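/- Let F : 2^V → ℝ be submodular with F(∅)=0 and let w_i > 0 for all i ∈ V and y ∈ ℝ^V. Then the two convex programs minimize ∑_{i∈V} w_i (x_i − y_i)^2 and minimize ∑_{i∈V} (1/w_i) log(exp(−w_i x_i) + exp(−w_i y_i)), both subject to x ∈ B(F), have the same optimal solution x*. -/

import Mathlib

/-- A set function is submodular iff it has diminishing marginal gains. -/
def Submodular {V : Type*} [DecidableEq V] (F : Finset V → ℝ) : Prop :=
  ∀ A B : Finset V, A ⊆ B → ∀ x ∉ B,
    F (insert x B) - F B ≤ F (insert x A) - F A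

/-- The base polytope `B(F)` of a normalized submodular function. -/
def basePolytope {V : Type*} [Fintype V] [DecidableEq V] (F : Finset V → ℝ) :
    Set (V → ℝ) :=
  {s | (∀ A : Finset V, ∑ i ∈ A, s i ≤ F A) ∧ ∑ i : V, s i = F Finset.univ}

open Finset

lemma abel_core (n : ℕ) (a u : ℕ → ℝ)
    (ha : ∀ k, k + 1 < n → a k ≤ a (k + 1))
    (hU : ∀ k, k + 1 < n → a k < a (k + 1) → ∑ j ∈ range (k + 1), u j ≤ 0)
    (hUn : ∑ j ∈ range n, u j = 0) :
    0 ≤ ∑ k ∈ range n, a k * u k := by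
  rcases n with _ | m
  · simp
  have hbp := Finset.sum_range_by_parts a u (m + 1)
  simp only [smul_eq_mul, Nat.add_sub_cancel] at hbp
  rw [hbp, hUn, mul_zero]
  have : ∑ i ∈ range m, (a (i + 1) - a i) * ∑ j ∈ range (i + 1), u j ≤ 0 := by
    apply Finset.sum_nonpos
    intro k hk
    rw [Finset.mem_range] at hk
    rcases eq_or_lt_of_le (ha k (by omega)) with h | h
    · rw [← h]; simp
    · have h2 := hU k (by omega) h
      nlinarith
  linarith

lemma abel_core2 (n : ℕ) (a u : ℕ → ℝ)
    (ha : ∀ k, k + 1 < n → a k ≤ a (k + 1))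
    (hU : ∀ k, k + 1 ≤ n → ∑ j ∈ range (k + 1), u j ≤ 0)
    (hUn : ∑ j ∈ range n, u j = 0)
    (hsum : ∑ k ∈ range n, a k * u k ≤ 0) :
    ∀ k, k + 1 < n → a k < a (k + 1) → ∑ j ∈ range (k + 1), u j = 0 := by
  have h0 : 0 ≤ ∑ k ∈ range n, a k * u k :=
    abel_core n a u ha (fun k hk _ => hU k (le_of_lt hk)) hUn
  have heq : ∑ k ∈ range n, a k * u k = 0 := le_antisymm hsum h0
  rcases n with _ | m
  · intro k hk; omega
  have hbp := Finset.sum_range_by_parts a u (m + 1)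
  simp only [smul_eq_mul, Nat.add_sub_cancel] at hbp
  rw [heq, hUn, mul_zero] at hbp
  have hterms : ∀ i ∈ range m, (a (i + 1) - a i) * ∑ j ∈ range (i + 1), u j ≤ 0 := by
    intro k hk
    rw [Finset.mem_range] at hk
    rcases eq_or_lt_of_le (ha k (by omega)) with h | h
    · rw [← h]; simp
    · have h2 := hU k (by omega)
      nlinarith
  have hz : ∑ i ∈ range m, (a (i + 1) - a i) * ∑ j ∈ range (i + 1), u j = 0 := by linarith
  rw [Finset.sum_eq_zero_iff_of_nonpos hterms] at hz
  intro k hk hlt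
  have := hz k (Finset.mem_range.mpr (by omega))
  rcases mul_eq_zero.mp this with h | h
  · exfalso; linarith
  · exact h

section Greedy

variable {V : Type*} [Fintype V] [DecidableEq V]
variable (F : Finset V → ℝ) {n : ℕ} (σ : Fin n ≃ V)

/-- initial segments of the enumeration σ -/
def segs (k : ℕ) : Finset V :=
  (Finset.univ.filter fun j : Fin n => (j : ℕ) < k).image σ

lemma segs_zero : segs σ 0 = (∅ : Finset V) := by
  simp [segs]

lemma segs_card (hn : n = Fintype.card V) : segs σ n = Finset.univ := by
  apply Finset.eq_univ_iff_forall.mpr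
  intro i
  simp only [segs, Finset.mem_image]
  exact ⟨σ.symm i, by simp [(σ.symm i).isLt], by simp⟩

lemma segs_succ (k : ℕ) (h : k < n) :
    segs σ (k + 1) = insert (σ ⟨k, h⟩) (segs σ k) := by
  simp only [segs]
  rw [show (Finset.univ.filter fun j : Fin n => (j : ℕ) < k + 1)
        = insert (⟨k, h⟩ : Fin n) (Finset.univ.filter fun j : Fin n => (j : ℕ) < k) by
    ext j
    simp only [Finset.mem_filter, Finset.mem_insert, Finset.mem_univ, true_and]
    constructor
    · intro hj
      rcases Nat.lt_succ_iff_lt_or_eq.mp hj with h1 | h1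
      · exact Or.inr h1
      · exact Or.inl (Fin.ext h1)
    · rintro (rfl | hj)
      · simp
      · omega]
  rw [Finset.image_insert]

lemma segs_not_mem (k : ℕ) (h : k < n) : σ ⟨k, h⟩ ∉ segs σ k := by
  simp only [segs, Finset.mem_image, Finset.mem_filter, Finset.mem_univ, true_and]
  rintro ⟨j, hj, hje⟩
  have : (j : ℕ) = k := congrArg Fin.val (σ.injective hje)
  omega

lemma segs_stab (k : ℕ) (h : n ≤ k) : segs σ k = segs σ n := by
  simp only [segs]
  congr 1
  apply Finset.filter_congr
  intro j _
  exact iff_of_true (lt_of_lt_of_le j.isLt h) j.isLt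

/-- the greedy vertex -/
def greedy : V → ℝ :=
  fun i => F (segs σ ((σ.symm i : ℕ) + 1)) - F (segs σ (σ.symm i))

lemma greedy_apply (k : ℕ) (h : k < n) :
    greedy F σ (σ ⟨k, h⟩) = F (segs σ (k + 1)) - F (segs σ k) := by
  simp [greedy]

lemma greedy_sum_segs (hF0 : F ∅ = 0) :
    ∀ k, k ≤ n → ∑ i ∈ segs σ k, greedy F σ i = F (segs σ k) := by
  intro k
  induction k with
  | zero => intro _; simp [segs_zero, hF0]
  | succ k ih =>
    intro hk
    have hkn : k < n := hk
    rw [segs_succ σ k hkn, Finset.sum_insert (segs_not_mem σ k hkn),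
      greedy_apply F σ k hkn, ih (le_of_lt hkn), ← segs_succ σ k hkn]
    ring

lemma greedy_le (hsub : Submodular F) (hF0 : F ∅ = 0) :
    ∀ k, ∀ A : Finset V, A ⊆ segs σ k → ∑ i ∈ A, greedy F σ i ≤ F A := by
  intro k
  induction k with
  | zero =>
    intro A hA
    rw [segs_zero] at hA
    rw [Finset.subset_empty.mp hA]
    simp [hF0]
  | succ k ih =>
    intro A hA
    by_cases hkn : k < n
    · rw [segs_succ σ k hkn] at hA
      by_cases hmem : σ ⟨k, hkn⟩ ∈ A
      · have hA' : A.erase (σ ⟨k, hkn⟩) ⊆ segs σ k := by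
          intro i hi
          rcases Finset.mem_erase.mp hi with ⟨hne, hiA⟩
          rcases Finset.mem_insert.mp (hA hiA) with h | h
          · exact absurd h hne
          · exact h
        have hsm := hsub (A.erase (σ ⟨k, hkn⟩)) (segs σ k) hA' (σ ⟨k, hkn⟩)
          (segs_not_mem σ k hkn)
        rw [Finset.insert_erase hmem] at hsm
        have hIH := ih _ hA'
        calc ∑ i ∈ A, greedy F σ i
            = ∑ i ∈ A.erase (σ ⟨k, hkn⟩), greedy F σ i + greedy F σ (σ ⟨k, hkn⟩) :=
              (Finset.sum_erase_add A _ hmem).symm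
          _ ≤ F (A.erase (σ ⟨k, hkn⟩)) + (F (segs σ (k + 1)) - F (segs σ k)) := by
              rw [greedy_apply F σ k hkn]; linarith
          _ ≤ F A := by
              rw [segs_succ σ k hkn]; linarith
      · exact ih A (fun i hi => by
          rcases Finset.mem_insert.mp (hA hi) with h | h
          · exact absurd (h ▸ hi) hmem
          · exact h)
    · push_neg at hkn
      rw [segs_stab σ (k+1) (by omega), ← segs_stab σ k hkn] at hA
      exact ih A hA

lemma greedy_mem (hsub : Submodular F) (hF0 : F ∅ = 0) (hn : n = Fintype.card V) :
    greedy F σ ∈ basePolytope F := by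
  constructor
  · intro A
    exact greedy_le F σ hsub hF0 n A (by rw [segs_card σ hn]; exact Finset.subset_univ A)
  · rw [← segs_card σ hn]
    exact greedy_sum_segs F σ hF0 n le_rfl

end Greedy
section Lin
variable {V : Type*} [Fintype V] [DecidableEq V] {n : ℕ}

def natify (σ : Fin n ≃ V) (u : V → ℝ) : ℕ → ℝ :=
  fun k => if h : k < n then u (σ ⟨k, h⟩) else 0

lemma natify_mul (σ : Fin n ≃ V) (a b : V → ℝ) (k : ℕ) :
    natify σ (fun i => a i * b i) k = natify σ a k * natify σ b k := by
  unfold natify; split <;> simp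

lemma natify_sub (σ : Fin n ≃ V) (a b : V → ℝ) (k : ℕ) :
    natify σ (fun i => a i - b i) k = natify σ a k - natify σ b k := by
  unfold natify; split <;> simp

lemma sum_segs_eq (σ : Fin n ≃ V) (u : V → ℝ) :
    ∀ k, k ≤ n → ∑ i ∈ segs σ k, u i = ∑ j ∈ range k, natify σ u j := by
  intro k
  induction k with
  | zero => intro _; simp [segs_zero]
  | succ k ih =>
    intro hk
    have hkn : k < n := hk
    rw [segs_succ σ k hkn, Finset.sum_insert (segs_not_mem σ k hkn),
      Finset.sum_range_succ, ih (le_of_lt hkn)]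
    rw [show natify σ u k = u (σ ⟨k, hkn⟩) by unfold natify; rw [dif_pos hkn]]
    ring

lemma sum_univ_eq_natify (σ : Fin n ≃ V) (hn : n = Fintype.card V) (u : V → ℝ) :
    ∑ i : V, u i = ∑ j ∈ range n, natify σ u j := by
  rw [← sum_segs_eq σ u n le_rfl, segs_card σ hn]

lemma linear_transfer (F : Finset V → ℝ) (hsub : Submodular F) (hF0 : F ∅ = 0)
    (c d x : V → ℝ) (hx : x ∈ basePolytope F)
    (hcd : ∀ i j, c i ≤ c j ↔ d i ≤ d j)
    (hmin : ∀ z ∈ basePolytope F, ∑ i : V, c i * x i ≤ ∑ i : V, c i * z i) :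
    ∀ z ∈ basePolytope F, ∑ i : V, d i * x i ≤ ∑ i : V, d i * z i := by
  classical
  set m := Fintype.card V with hm
  let e : Fin m ≃ V := (Fintype.equivFin V).symm
  let σ : Fin m ≃ V := (Tuple.sort (c ∘ e)).trans e
  have hmono : Monotone fun j : Fin m => c (σ j) := Tuple.monotone_sort (c ∘ e)
  have hstrict : ∀ i j, c i < c j ↔ d i < d j := fun i j =>
    lt_iff_lt_of_le_iff_le (hcd j i)
  set cc := natify σ c with hcc
  set dd := natify σ d with hdd
  have hccval : ∀ k (h : k < m), cc k = c (σ ⟨k, h⟩) := by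
    intro k h; rw [hcc]; unfold natify; rw [dif_pos h]
  have hddval : ∀ k (h : k < m), dd k = d (σ ⟨k, h⟩) := by
    intro k h; rw [hdd]; unfold natify; rw [dif_pos h]
  have ha_c : ∀ k, k + 1 < m → cc k ≤ cc (k + 1) := by
    intro k hk
    rw [hccval k (by omega), hccval (k + 1) hk]
    exact hmono (by simp [Fin.le_def])
  have ha_d : ∀ k, k + 1 < m → dd k ≤ dd (k + 1) := by
    intro k hk
    rw [hddval k (by omega), hddval (k + 1) hk]
    exact (hcd _ _).mp (by rw [← hccval k (by omega), ← hccval (k + 1) hk]; exact ha_c k hk)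
  have hgap : ∀ k, k + 1 < m → (dd k < dd (k + 1) → cc k < cc (k + 1)) := by
    intro k hk h
    rw [hddval k (by omega), hddval (k + 1) hk] at h
    rw [hccval k (by omega), hccval (k + 1) hk]
    exact (hstrict _ _).mpr h
  -- greedy point
  let g : V → ℝ := greedy F σ
  have hg : g ∈ basePolytope F := greedy_mem F σ hsub hF0 hm
  -- tightness of x on the chain where cc has gaps
  have tight : ∀ k, k + 1 < m → cc k < cc (k + 1) →
      ∑ i ∈ segs σ (k + 1), x i = F (segs σ (k + 1)) := by
    have key := abel_core2 m cc (natify σ fun i => x i - g i) ha_c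
      (by
        intro k hk
        rw [← sum_segs_eq σ _ (k + 1) hk]
        have h1 : ∑ i ∈ segs σ (k + 1), (x i - g i)
            = ∑ i ∈ segs σ (k + 1), x i - ∑ i ∈ segs σ (k + 1), g i :=
          Finset.sum_sub_distrib _ _
        rw [h1, greedy_sum_segs F σ hF0 (k + 1) hk]
        have := hx.1 (segs σ (k + 1))
        linarith)
      (by
        rw [← sum_segs_eq σ _ m le_rfl, segs_card σ hm]
        have h1 : ∑ i : V, (x i - g i) = ∑ i : V, x i - ∑ i : V, g i :=
          Finset.sum_sub_distrib _ _
        rw [h1, hx.2, hg.2]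
        ring)
      (by
        have h2 : ∀ k ∈ range m, cc k * natify σ (fun i => x i - g i) k
            = natify σ (fun i => c i * (x i - g i)) k := by
          intro k _
          rw [natify_mul σ c (fun i => x i - g i) k]
        rw [Finset.sum_congr rfl h2, ← sum_univ_eq_natify σ hm]
        have h3 : ∑ i : V, c i * (x i - g i) = ∑ i : V, c i * x i - ∑ i : V, c i * g i := by
          rw [← Finset.sum_sub_distrib]
          exact Finset.sum_congr rfl fun i _ => by ring
        rw [h3]
        have := hmin g hg
        linarith)
    intro k hk hgapk
    have := key k hk hgapk
    rw [← sum_segs_eq σ _ (k + 1) (le_of_lt hk)] at this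
    have h1 : ∑ i ∈ segs σ (k + 1), (x i - g i)
        = ∑ i ∈ segs σ (k + 1), x i - ∑ i ∈ segs σ (k + 1), g i :=
      Finset.sum_sub_distrib _ _
    rw [h1, greedy_sum_segs F σ hF0 (k + 1) (le_of_lt hk)] at this
    linarith
  -- conclusion
  intro z hz
  have main : 0 ≤ ∑ i : V, d i * (z i - x i) := by
    have hrw : ∑ i : V, d i * (z i - x i)
        = ∑ k ∈ range m, dd k * natify σ (fun i => z i - x i) k := by
      rw [sum_univ_eq_natify σ hm]
      exact Finset.sum_congr rfl fun k _ => natify_mul σ d (fun i => z i - x i) k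
    rw [hrw]
    apply abel_core m dd (natify σ fun i => z i - x i) ha_d
    · intro k hk hgapd
      have hgapc := hgap k hk hgapd
      rw [← sum_segs_eq σ _ (k + 1) (le_of_lt hk)]
      have h1 : ∑ i ∈ segs σ (k + 1), (z i - x i)
          = ∑ i ∈ segs σ (k + 1), z i - ∑ i ∈ segs σ (k + 1), x i :=
        Finset.sum_sub_distrib _ _
      rw [h1, tight k hk hgapc]
      have := hz.1 (segs σ (k + 1))
      linarith
    · rw [← sum_segs_eq σ _ m le_rfl, segs_card σ hm]
      have h1 : ∑ i : V, (z i - x i) = ∑ i : V, z i - ∑ i : V, x i :=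
        Finset.sum_sub_distrib _ _
      rw [h1, hx.2, hz.2]
      ring
  have hexp : ∑ i : V, d i * (z i - x i) = ∑ i : V, d i * z i - ∑ i : V, d i * x i := by
    rw [← Finset.sum_sub_distrib]
    exact Finset.sum_congr rfl fun i _ => by ring
  linarith [hexp ▸ main]
end Lin
open Finset Real Filter

lemma first_order {V : Type*} [Fintype V] {C : Set (V → ℝ)} (hC : Convex ℝ C)
    (x : V → ℝ) (hx : x ∈ C) (φ : V → ℝ → ℝ) (g : V → ℝ)
    (hder : ∀ i, HasDerivAt (φ i) (g i) (x i))
    (hgrad : ∀ i s, φ i (x i) + g i * (s - x i) ≤ φ i s) :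
    (∀ z ∈ C, ∑ i, φ i (x i) ≤ ∑ i, φ i (z i)) ↔
    (∀ z ∈ C, ∑ i, g i * x i ≤ ∑ i, g i * z i) := by
  constructor
  · intro hmin z hz
    set D : ℝ := ∑ i, g i * (z i - x i) with hD
    suffices h : 0 ≤ D by
      have : D = ∑ i, g i * z i - ∑ i, g i * x i := by
        rw [hD, ← Finset.sum_sub_distrib]
        exact Finset.sum_congr rfl fun i _ => by ring
      linarith [this ▸ h]
    set h : ℝ → ℝ := fun t => ∑ i, φ i (x i + t * (z i - x i)) with hh
    have hd : HasDerivAt h D 0 := by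
      rw [hh, hD]
      apply HasDerivAt.fun_sum
      intro i _
      have inner : HasDerivAt (fun t : ℝ => x i + t * (z i - x i)) (z i - x i) 0 := by
        simpa using ((hasDerivAt_id (0 : ℝ)).mul_const (z i - x i)).const_add (x i)
      have hφ : HasDerivAt (φ i) (g i) (x i + 0 * (z i - x i)) := by
        simpa using hder i
      exact (hφ.comp 0 inner)
    have hge : ∀ t ∈ Set.Ioc (0 : ℝ) 1, h 0 ≤ h t := by
      intro t ht
      have hmem : (fun i => x i + t * (z i - x i)) ∈ C := by
        have := hC hx hz (by linarith [ht.2] : (0:ℝ) ≤ 1 - t) (le_of_lt ht.1) (by ring)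
        convert this using 1
        funext i
        simp only [Pi.add_apply, Pi.smul_apply, smul_eq_mul]
        ring
      have := hmin _ hmem
      simpa [hh] using this
    have hslope := hasDerivAt_iff_tendsto_slope.mp hd
    have htend : Tendsto (slope h 0) (nhdsWithin 0 (Set.Ioi 0)) (nhds D) :=
      hslope.mono_left (nhdsWithin_mono 0 (fun t ht => ne_of_gt ht))
    apply ge_of_tendsto htend
    filter_upwards [Ioc_mem_nhdsGT_of_mem (Set.mem_Ico.mpr ⟨le_rfl, one_pos⟩)] with t ht
    rw [slope_def_field]
    have h1 := hge t ht
    have h2 : (0:ℝ) < t - 0 := by simpa using ht.1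
    exact div_nonneg (by linarith) (le_of_lt h2)
  · intro hlin z hz
    have h1 : ∀ i ∈ Finset.univ, φ i (x i) + g i * (z i - x i) ≤ φ i (z i) :=
      fun i _ => hgrad i (z i)
    have h2 := Finset.sum_le_sum h1
    have h3 : ∑ i, (φ i (x i) + g i * (z i - x i))
        = ∑ i, φ i (x i) + (∑ i, g i * z i - ∑ i, g i * x i) := by
      rw [Finset.sum_add_distrib]
      congr 1
      rw [← Finset.sum_sub_distrib]
      exact Finset.sum_congr rfl fun i _ => by ring
    rw [h3] at h2
    have := hlin z hz
    linarith

lemma frac_eq (u v : ℝ) :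
    Real.exp u / (Real.exp u + Real.exp v) = 1 / (1 + Real.exp (v - u)) := by
  have h1 : (0:ℝ) < Real.exp u + Real.exp v := by positivity
  have h2 : (0:ℝ) < 1 + Real.exp (v - u) := by positivity
  rw [div_eq_div_iff h1.ne' h2.ne', mul_add, mul_one, ← Real.exp_add,
    show u + (v - u) = v by ring]
  ring

lemma negfrac_mono (s t : ℝ) :
    (-(1 / (1 + Real.exp s)) ≤ -(1 / (1 + Real.exp t))) ↔ s ≤ t := by
  rw [neg_le_neg_iff]
  constructor
  · intro h
    by_contra hc
    push_neg at hc
    have he := Real.exp_lt_exp.mpr hc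
    have h1 : (0:ℝ) < 1 + Real.exp t := by positivity
    have := one_div_lt_one_div_of_lt h1 (by linarith : 1 + Real.exp t < 1 + Real.exp s)
    linarith
  · intro h
    have he := Real.exp_le_exp.mpr h
    have h1 : (0:ℝ) < 1 + Real.exp s := by positivity
    exact one_div_le_one_div_of_le h1 (by linarith)

-- gradient inequality for the log objective
lemma log_grad_ineq (w x y s : ℝ) (hw : 0 < w) :
    (1 / w) * Real.log (Real.exp (-(w * x)) + Real.exp (-(w * y)))
      + (-(Real.exp (-(w * x)) / (Real.exp (-(w * x)) + Real.exp (-(w * y))))) * (s - x)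
    ≤ (1 / w) * Real.log (Real.exp (-(w * s)) + Real.exp (-(w * y))) := by
  set a : ℝ := Real.exp (-(w * x)) with ha
  set cst : ℝ := Real.exp (-(w * y)) with hc
  have hapos : 0 < a := Real.exp_pos _
  have hcpos : 0 < cst := Real.exp_pos _
  have hpos : 0 < a + cst := by linarith
  set p : ℝ := a / (a + cst) with hp
  have hppos : 0 < p := div_pos hapos hpos
  have hple : p ≤ 1 := by
    rw [hp, div_le_one hpos]; linarith
  set t : ℝ := w * (x - s) with hts
  have hes : Real.exp (-(w * s)) = a * Real.exp t := by
    rw [ha, ← Real.exp_add]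
    congr 1
    rw [hts]; ring
  have key : Real.exp (p * t) ≤ p * Real.exp t + (1 - p) := by
    have := convexOn_exp.2 (Set.mem_univ t) (Set.mem_univ (0:ℝ))
      (le_of_lt hppos) (by linarith : (0:ℝ) ≤ 1 - p) (by ring)
    simpa using this
  have key2 : p * Real.exp t + (1 - p) = (a * Real.exp t + cst) / (a + cst) := by
    rw [hp]
    field_simp
    ring
  have hnum : 0 < a * Real.exp t + cst := by positivity
  have H : p * t ≤ Real.log (a * Real.exp t + cst) - Real.log (a + cst) := by
    have hlog : Real.log (Real.exp (p * t)) ≤ Real.log ((a * Real.exp t + cst) / (a + cst)) := by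
      apply Real.log_le_log (Real.exp_pos _)
      rw [← key2]; exact key
    rw [Real.log_exp, Real.log_div hnum.ne' hpos.ne'] at hlog
    exact hlog
  rw [hes]
  have hw' : (0:ℝ) < 1 / w := by positivity
  have H2 : (1 / w) * (p * t) ≤ (1 / w) * (Real.log (a * Real.exp t + cst) - Real.log (a + cst)) :=
    mul_le_mul_of_nonneg_left H hw'.le
  have ht' : (1 / w) * (p * t) = -p * (s - x) := by
    rw [hts]
    field_simp
    ring
  nlinarith [H2, ht']
open Finset Real Filter

lemma basePolytope_convex {V : Type*} [Fintype V] [DecidableEq V] (F : Finset V → ℝ) :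
    Convex ℝ (basePolytope F) := by
  intro a ha b hb s t hs ht hst
  have key : ∀ A : Finset V, ∑ i ∈ A, (s • a + t • b) i
      = s * ∑ i ∈ A, a i + t * ∑ i ∈ A, b i := by
    intro A
    simp only [Pi.add_apply, Pi.smul_apply, smul_eq_mul]
    rw [Finset.sum_add_distrib, Finset.mul_sum, Finset.mul_sum]
  constructor
  · intro A
    have h1 := ha.1 A
    have h2 := hb.1 A
    rw [key A]
    have h3 : s * F A + t * F A = F A := by linear_combination (F A) * hst
    linarith [mul_le_mul_of_nonneg_left h1 hs, mul_le_mul_of_nonneg_left h2 ht]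
  · rw [key Finset.univ, ha.2, hb.2]
    linear_combination (F Finset.univ) * hst


/-- For positive weights `wᵢ > 0` and any `y`, the convex programs
minimizing `∑ wᵢ(xᵢ-yᵢ)²` and `∑ (1/wᵢ) log(exp(-wᵢxᵢ)+exp(-wᵢyᵢ))` over the
base polytope `B(F)` have the same optimal solution. -/
theorem stmt_3 {V : Type*} [Fintype V] [DecidableEq V]
    (F : Finset V → ℝ) (hsub : Submodular F) (hF0 : F ∅ = 0)
    (w y : V → ℝ) (hw : ∀ i, 0 < w i) (x : V → ℝ) (hx : x ∈ basePolytope F) :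
    ((∀ z ∈ basePolytope F,
        ∑ i : V, w i * (x i - y i) ^ 2 ≤ ∑ i : V, w i * (z i - y i) ^ 2) ↔
     (∀ z ∈ basePolytope F,
        ∑ i : V, (1 / w i) *
          Real.log (Real.exp (-(w i * x i)) + Real.exp (-(w i * y i)))
        ≤ ∑ i : V, (1 / w i) *
          Real.log (Real.exp (-(w i * z i)) + Real.exp (-(w i * y i))))) := by
  have hconv := basePolytope_convex F
  set g1 : V → ℝ := fun i => 2 * w i * (x i - y i) with hg1
  set g2 : V → ℝ := fun i =>
    -(Real.exp (-(w i * x i)) / (Real.exp (-(w i * x i)) + Real.exp (-(w i * y i)))) with hg2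
  have iff1 : (∀ z ∈ basePolytope F,
        ∑ i : V, w i * (x i - y i) ^ 2 ≤ ∑ i : V, w i * (z i - y i) ^ 2) ↔
      (∀ z ∈ basePolytope F, ∑ i : V, g1 i * x i ≤ ∑ i : V, g1 i * z i) := by
    apply first_order hconv x hx (fun i s => w i * (s - y i) ^ 2) g1
    · intro i
      have h := (((hasDerivAt_id (x i)).sub_const (y i)).pow 2).const_mul (w i)
      refine h.congr_deriv ?_
      simp only [id_eq, hg1]
      push_cast
      ring
    · intro i s
      have := mul_nonneg (hw i).le (sq_nonneg (s - x i))
      simp only [hg1]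
      nlinarith
  have iff2 : (∀ z ∈ basePolytope F,
        ∑ i : V, (1 / w i) *
          Real.log (Real.exp (-(w i * x i)) + Real.exp (-(w i * y i)))
        ≤ ∑ i : V, (1 / w i) *
          Real.log (Real.exp (-(w i * z i)) + Real.exp (-(w i * y i)))) ↔
      (∀ z ∈ basePolytope F, ∑ i : V, g2 i * x i ≤ ∑ i : V, g2 i * z i) := by
    apply first_order hconv x hx
      (fun i s => (1 / w i) * Real.log (Real.exp (-(w i * s)) + Real.exp (-(w i * y i)))) g2
    · intro i
      have h1 : HasDerivAt (fun s : ℝ => -(w i * s)) (-(w i)) (x i) := by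
        have := ((hasDerivAt_id (x i)).const_mul (w i)).neg
        simp only [mul_one] at this
        exact this
      have h2 := h1.exp
      have h3 := h2.add_const (Real.exp (-(w i * y i)))
      have hpos : 0 < Real.exp (-(w i * x i)) + Real.exp (-(w i * y i)) := by positivity
      have h4 := h3.log hpos.ne'
      have h5 := h4.const_mul (1 / w i)
      refine h5.congr_deriv ?_
      rw [hg2]
      have hwne : w i ≠ 0 := (hw i).ne'
      field_simp
    · intro i s
      exact log_grad_ineq (w i) (x i) (y i) s (hw i)
  have hg2alt : ∀ k, g2 k = -(1 / (1 + Real.exp (w k * (x k - y k)))) := by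
    intro k
    rw [hg2]
    simp only
    rw [frac_eq (-(w k * x k)) (-(w k * y k)),
      show -(w k * y k) - -(w k * x k) = w k * (x k - y k) by ring]
  have hcd : ∀ i j, g1 i ≤ g1 j ↔ g2 i ≤ g2 j := by
    intro i j
    rw [hg2alt i, hg2alt j, negfrac_mono]
    simp only [hg1]
    constructor <;> intro h <;> linarith
  constructor
  · intro hq
    exact iff2.mpr (linear_transfer F hsub hF0 g1 g2 x hx hcd (iff1.mp hq))
  · intro hl
    exact iff1.mpr (linear_transfer F hsub hF0 g2 g1 x hx
      (fun i j => (hcd i j).symm) (iff2.mp hl))
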